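/- Shapiro coboundary comparison: Let Γ be a profinite group, Δ a closed subgroup, X a smooth abelian Δ-module, and let (r, s) and (r̄, s̄) be two section data for Δ\Γ as above, with corresponding Shapiro maps S and S̄ in degree 2. Given a 2-cocycle z ∈ Z²(Δ, X) (homogeneous), define the 1-cochain c ∈ C¹(Γ, Ind_Δ^Γ X) by c(σ₀, σ₁)(a) = z(r(aσ₀)r(aσ₁), r̄(aσ₀)) · z(r(aσ₁), r̄(aσ₀), r̄(aσ₁))⁻¹ [with appropriate homogeneous-cochain conventions]. Then ∂c = S(z) · S̄(z)⁻¹, i.e., the two Shapiro images of z differ by the explicit coboundary ∂c. -/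
import Mathlib


/-- The explicit Shapiro map on homogeneous cochains. -/
def shap {Γ : Type} [Group Γ] {Δ : Subgroup Γ} {X : Type} [AddCommGroup X]
    [DistribMulAction Δ X] (r : Γ → Δ) {k : ℕ}
    (c : (Fin (k + 1) → Δ) → X) : (Fin (k + 1) → Γ) → Γ → X :=
  fun σ a => r a • c (fun j => (r a)⁻¹ * r (a * σ j))

/-- Differential on homogeneous cochains. -/
def dd {G V : Type} [AddCommGroup V] {k : ℕ}
    (c : (Fin (k + 1) → G) → V) : (Fin (k + 2) → G) → V :=
  fun σ => ∑ j : Fin (k + 2), ((-1 : ℤ) ^ (j : ℕ)) • c (fun m => σ (j.succAbove m))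

/-- The explicit comparison 1-cochain between the Shapiro maps attached to two
section data `r` and `r̄`. -/
def cc {Γ : Type} [Group Γ] {Δ : Subgroup Γ} {X : Type} [AddCommGroup X]
    [DistribMulAction Δ X] (r rbar : Γ → Δ)
    (z : (Fin 3 → Δ) → X) : (Fin 2 → Γ) → Γ → X :=
  fun σ a =>
    z ![r (a * σ 0), r (a * σ 1), rbar (a * σ 1)]
      - z ![r (a * σ 0), rbar (a * σ 0), rbar (a * σ 1)]

lemma dd2 {G V : Type} [AddCommGroup V] (c : (Fin 2 → G) → V) (v : Fin 3 → G) :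
    dd c v = c ![v 1, v 2] - c ![v 0, v 2] + c ![v 0, v 1] := by
  have e0 : (fun m : Fin 2 => v ((0 : Fin 3).succAbove m)) = ![v 1, v 2] := by
    funext m; fin_cases m <;> rfl
  have e1 : (fun m : Fin 2 => v ((1 : Fin 3).succAbove m)) = ![v 0, v 2] := by
    funext m; fin_cases m <;> rfl
  have e2 : (fun m : Fin 2 => v ((2 : Fin 3).succAbove m)) = ![v 0, v 1] := by
    funext m; fin_cases m <;> rfl
  show (∑ j : Fin 3, ((-1 : ℤ) ^ (j : ℕ)) • c fun m => v (j.succAbove m)) = _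
  rw [Fin.sum_univ_three, e0, e1, e2]
  norm_num
  abel

lemma dd3 {G V : Type} [AddCommGroup V] (c : (Fin 3 → G) → V) (v : Fin 4 → G) :
    dd c v = c ![v 1, v 2, v 3] - c ![v 0, v 2, v 3] + c ![v 0, v 1, v 3]
      - c ![v 0, v 1, v 2] := by
  have e0 : (fun m : Fin 3 => v ((0 : Fin 4).succAbove m)) = ![v 1, v 2, v 3] := by
    funext m; fin_cases m <;> rfl
  have e1 : (fun m : Fin 3 => v ((1 : Fin 4).succAbove m)) = ![v 0, v 2, v 3] := by
    funext m; fin_cases m <;> rfl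
  have e2 : (fun m : Fin 3 => v ((2 : Fin 4).succAbove m)) = ![v 0, v 1, v 3] := by
    funext m; fin_cases m <;> rfl
  have e3 : (fun m : Fin 3 => v ((3 : Fin 4).succAbove m)) = ![v 0, v 1, v 2] := by
    funext m; fin_cases m <;> rfl
  show (∑ j : Fin 4, ((-1 : ℤ) ^ (j : ℕ)) • c fun m => v (j.succAbove m)) = _
  rw [Fin.sum_univ_four, e0, e1, e2, e3]
  norm_num [show ((3 : Fin 4) : ℕ) = 3 from rfl]
  abel

/-- Lemma B.4: for a homogeneous 2-cocycle `z ∈ Z²(Δ, X)` and two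
section data `(r, s)` and `(r̄, s̄)`, the explicit 1-cochain `c` satisfies
`∂c = S(z) − S̄(z)`, i.e. the two Shapiro images of `z` differ by this explicit
coboundary. -/
theorem stmt13
    (Γ : Type) [Group Γ] (Δ : Subgroup Γ)
    (X : Type) [AddCommGroup X] [DistribMulAction Δ X]
    (r rbar : Γ → Δ)
    (hreq : ∀ (δ : Δ) (γ : Γ), r ((δ : Γ) * γ) = δ * r γ)
    (hrbareq : ∀ (δ : Δ) (γ : Γ), rbar ((δ : Γ) * γ) = δ * rbar γ)
    (hr1 : r 1 = 1) (hrbar1 : rbar 1 = 1)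
    (z : (Fin 3 → Δ) → X)
    (hz_equiv : ∀ (δ : Δ) (σ : Fin 3 → Δ), z (fun j => δ * σ j) = δ • z σ)
    (hz_cocycle : ∀ σ : Fin 4 → Δ, dd z σ = 0) :
    ∀ (σ : Fin 3 → Γ) (a : Γ),
      dd (cc r rbar z) σ a = shap r z σ a - shap rbar z σ a := by
  intro σ a
  have hshap : ∀ q : Γ → Δ, shap q z σ a = z (fun j => q (a * σ j)) := by
    intro q
    rw [shap, ← hz_equiv (q a)]
    congr 1
    funext j
    exact mul_inv_cancel_left _ _
  set r0 := r (a * σ 0); set r1 := r (a * σ 1); set r2 := r (a * σ 2)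
  set b0 := rbar (a * σ 0); set b1 := rbar (a * σ 1); set b2 := rbar (a * σ 2)
  have hA := hz_cocycle ![r0, r1, r2, b2]
  have hB := hz_cocycle ![r0, r1, b1, b2]
  have hC := hz_cocycle ![r0, b0, b1, b2]
  rw [dd3] at hA hB hC
  have v3 : ∀ w x y t : Δ, (![w, x, y, t] : Fin 4 → Δ) 3 = t := fun _ _ _ _ => rfl
  have v2 : ∀ w x y t : Δ, (![w, x, y, t] : Fin 4 → Δ) 2 = y := fun _ _ _ _ => rfl
  have v1 : ∀ w x y t : Δ, (![w, x, y, t] : Fin 4 → Δ) 1 = x := fun _ _ _ _ => rfl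
  have v0 : ∀ w x y t : Δ, (![w, x, y, t] : Fin 4 → Δ) 0 = w := fun _ _ _ _ => rfl
  simp only [v0, v1, v2, v3] at hA hB hC
  rw [hshap r, hshap rbar]
  have hr : (fun j => r (a * σ j)) = ![r0, r1, r2] := by
    funext j; fin_cases j <;> rfl
  have hb : (fun j => rbar (a * σ j)) = ![b0, b1, b2] := by
    funext j; fin_cases j <;> rfl
  rw [hr, hb, dd2]
  simp only [Pi.add_apply, Pi.sub_apply, cc, Matrix.cons_val_zero, Matrix.cons_val_one,
    Matrix.head_cons]
  linear_combination (norm := abel) hA - hB + hC
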